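/- Let n, k, r, ρ be positive integers with (r+ρ-1) dividing n, k+1 ≤ n, and let μ = n/(r+ρ-1). Let R_1,…,R_μ be a partition of {1,…,n} into sets of size r+ρ-1, and let S_{k+1} = { S ⊆ {1,…,n} : |S| = k+1 and |S ∩ R_i| ≤ r for all i }. Then C(n,k+1) - |S_{k+1}| ≤ μ(ρ-1)·((k+1)/n)^{r+1}·C(n,k+1)·C(r+ρ-1, ξ), where ξ = min{ρ-2, ⌊(r+ρ-1)/2⌋}. -/

import Mathlib

lemma pmds_aux_pow (n k : ℕ) (hkn : k + 1 ≤ n) :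
    ∀ j, j ≤ k + 1 →
      n ^ j * Nat.choose (n - j) (k + 1 - j) ≤ (k + 1) ^ j * Nat.choose n (k + 1) := by
  intro j
  induction j with
  | zero => simp
  | succ j ih =>
    intro hj
    have hjk : j ≤ k := by omega
    have hjn : j < n := by omega
    have ihj := ih (by omega)
    have hid : (n - j) * Nat.choose (n - (j+1)) (k + 1 - (j+1)) =
        Nat.choose (n - j) (k + 1 - j) * (k + 1 - j) := by
      have := Nat.add_one_mul_choose_eq (n - j - 1) (k - j)
      have h1 : n - j - 1 + 1 = n - j := by omega
      have h2 : k - j + 1 = k + 1 - j := by omega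
      rw [h1, h2] at this
      have h3 : n - (j+1) = n - j - 1 := by omega
      have h4 : k + 1 - (j+1) = k - j := by omega
      rw [h3, h4, this]
    have hmul : n * (k + 1 - j) ≤ (k + 1) * (n - j) := by
      have h1 : (k+1)*j ≤ n*j := Nat.mul_le_mul_right j hkn
      zify [show j ≤ k+1 by omega, show j ≤ n by omega] at *
      nlinarith
    have hpos : 0 < n - j := by omega
    refine Nat.le_of_mul_le_mul_left ?_ hpos
    calc (n - j) * (n ^ (j+1) * Nat.choose (n - (j+1)) (k + 1 - (j+1)))
        = n ^ (j+1) * ((n - j) * Nat.choose (n - (j+1)) (k + 1 - (j+1))) := by ring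
      _ = n ^ j * Nat.choose (n - j) (k + 1 - j) * (n * (k + 1 - j)) := by
          rw [hid]; ring
      _ ≤ (k + 1) ^ j * Nat.choose n (k + 1) * ((k + 1) * (n - j)) := by
          exact Nat.mul_le_mul ihj hmul
      _ = (n - j) * ((k + 1) ^ (j+1) * Nat.choose n (k + 1)) := by ring

theorem pmds_S_k1_complement_bound (n k r ρ μ : ℕ)
    (hn : 0 < n) (hk : 0 < k) (hr : 0 < r) (hρ : 2 ≤ ρ)
    (hdvd : (r + ρ - 1) ∣ n) (hμ : μ = n / (r + ρ - 1)) (hkn : k + 1 ≤ n)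
    (R : Fin μ → Finset (Fin n))
    (hcover : Finset.univ.biUnion R = Finset.univ)
    (hdisj : ∀ i j, i ≠ j → Disjoint (R i) (R j))
    (hsize : ∀ i, (R i).card = r + ρ - 1) :
    (Nat.choose n (k + 1) : ℝ) -
      ((Finset.univ : Finset (Finset (Fin n))).filter
        (fun S => S.card = k + 1 ∧ ∀ i, (S ∩ R i).card ≤ r)).card ≤
      (μ : ℝ) * ((ρ : ℝ) - 1) * (((k : ℝ) + 1) / n) ^ (r + 1) *
        (Nat.choose n (k + 1) : ℝ) *
        (Nat.choose (r + ρ - 1) (min (ρ - 2) ((r + ρ - 1) / 2)) : ℝ) := by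
  classical
  set m := r + ρ - 1 with hm
  have hm2 : 2 ≤ m := by omega
  set A : Finset (Finset (Fin n)) :=
    Finset.univ.filter (fun S => S.card = k + 1) with hA
  have hAcard : A.card = Nat.choose n (k + 1) := by
    have : A = Finset.powersetCard (k + 1) Finset.univ := by
      ext S; simp [hA, Finset.mem_powersetCard]
    rw [this, Finset.card_powersetCard, Finset.card_univ, Fintype.card_fin]
  set good : Finset (Finset (Fin n)) :=
    Finset.univ.filter (fun S => S.card = k + 1 ∧ ∀ i, (S ∩ R i).card ≤ r) with hgood
  have hgs : good ⊆ A := by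
    rw [hgood, hA]
    exact Finset.monotone_filter_right _ (fun S _ h => h.1)
  have hgle : good.card ≤ Nat.choose n (k + 1) := hAcard ▸ Finset.card_le_card hgs
  -- nonnegativity of RHS pieces
  have hρ1 : (1:ℝ) ≤ (ρ:ℝ) - 1 := by
    have : (2:ℝ) ≤ ρ := by exact_mod_cast hρ
    linarith
  have hRHSnn : (0:ℝ) ≤ (μ : ℝ) * ((ρ : ℝ) - 1) * (((k : ℝ) + 1) / n) ^ (r + 1) *
        (Nat.choose n (k + 1) : ℝ) *
        (Nat.choose m (min (ρ - 2) (m / 2)) : ℝ) := by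
    apply mul_nonneg
    apply mul_nonneg
    apply mul_nonneg
    apply mul_nonneg
    · positivity
    · linarith
    · positivity
    · positivity
    · positivity
  by_cases hrk : k + 1 ≤ r
  · -- all sets are good
    have hall : good = A := by
      apply Finset.filter_congr
      intro S _
      constructor
      · exact fun h => h.1
      · intro h
        refine ⟨h, fun i => ?_⟩
        calc (S ∩ R i).card ≤ S.card := Finset.card_le_card Finset.inter_subset_left
          _ = k + 1 := h
          _ ≤ r := hrk
    rw [hall, hAcard]
    rw [sub_self]
    exact hRHSnn
  -- main case
  push_neg at hrk
  have hrk' : r ≤ k := by omega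
  set bad : Finset (Finset (Fin n)) := A \ good with hbad
  have hbadcard : (Nat.choose n (k + 1) : ℝ) - good.card = bad.card := by
    rw [hbad, Finset.card_sdiff_of_subset hgs, hAcard, Nat.cast_sub hgle]
  rw [hbadcard]
  -- union bound
  have hbsub : bad ⊆ Finset.univ.biUnion
      (fun i => A.filter (fun S => r + 1 ≤ (S ∩ R i).card)) := by
    intro S hS
    simp only [hbad, hA, hgood, Finset.mem_sdiff, Finset.mem_filter, Finset.mem_univ,
      true_and, not_and, not_forall, not_le, Finset.mem_biUnion] at hS ⊢
    obtain ⟨h1, h2⟩ := hS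
    obtain ⟨i, hi⟩ := h2 h1
    exact ⟨i, ⟨h1, hi⟩⟩
  -- per-group bound
  have hkey : ∀ T : Finset (Fin n), T.card = r + 1 →
      (A.filter (fun S => T ⊆ S)).card ≤ Nat.choose (n - (r + 1)) (k - r) := by
    intro T hT
    have hle : (A.filter (fun S => T ⊆ S)).card ≤
        ((Finset.univ \ T).powersetCard (k - r)).card := by
      apply Finset.card_le_card_of_injOn (fun S => S \ T)
      · intro S hS
        simp only [hA, Finset.mem_coe, Finset.mem_filter, Finset.mem_univ, true_and] at hS
        rw [Finset.mem_coe, Finset.mem_powersetCard]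
        refine ⟨Finset.sdiff_subset_sdiff (Finset.subset_univ S) Finset.Subset.rfl, ?_⟩
        rw [Finset.card_sdiff_of_subset hS.2, hS.1, hT]
        omega
      · intro S1 h1 S2 h2 h
        simp only [hA, Finset.coe_filter, Finset.mem_univ, Set.mem_setOf_eq,
          Finset.mem_filter, true_and] at h1 h2
        have h' : S1 \ T = S2 \ T := h
        have e1 := Finset.sdiff_union_of_subset h1.2
        have e2 := Finset.sdiff_union_of_subset h2.2
        rw [← e1, ← e2, h']
      -- note: card subgoal k+1-(r+1) = k-r
    calc (A.filter (fun S => T ⊆ S)).card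
        ≤ ((Finset.univ \ T).powersetCard (k - r)).card := hle
      _ = Nat.choose (n - (r + 1)) (k - r) := by
          rw [Finset.card_powersetCard, Finset.card_sdiff_of_subset (Finset.subset_univ T),
            Finset.card_univ, Fintype.card_fin, hT]
  have hBi : ∀ i, (A.filter (fun S => r + 1 ≤ (S ∩ R i).card)).card ≤
      Nat.choose m (r + 1) * Nat.choose (n - (r + 1)) (k - r) := by
    intro i
    have hsub : A.filter (fun S => r + 1 ≤ (S ∩ R i).card) ⊆
        ((R i).powersetCard (r + 1)).biUnion (fun T => A.filter (fun S => T ⊆ S)) := by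
      intro S hS
      simp only [Finset.mem_filter, Finset.mem_biUnion, Finset.mem_powersetCard] at hS ⊢
      obtain ⟨T, hTsub, hTcard⟩ := Finset.exists_subset_card_eq hS.2
      exact ⟨T, ⟨hTsub.trans Finset.inter_subset_right, hTcard⟩,
        ⟨hS.1, hTsub.trans Finset.inter_subset_left⟩⟩
    calc (A.filter (fun S => r + 1 ≤ (S ∩ R i).card)).card
        ≤ (((R i).powersetCard (r + 1)).biUnion (fun T => A.filter (fun S => T ⊆ S))).card :=
          Finset.card_le_card hsub
      _ ≤ ∑ T ∈ (R i).powersetCard (r + 1), (A.filter (fun S => T ⊆ S)).card :=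
          Finset.card_biUnion_le
      _ ≤ ∑ T ∈ (R i).powersetCard (r + 1), Nat.choose (n - (r + 1)) (k - r) := by
          apply Finset.sum_le_sum
          intro T hTm
          exact hkey T (Finset.mem_powersetCard.mp hTm).2
      _ = Nat.choose m (r + 1) * Nat.choose (n - (r + 1)) (k - r) := by
          rw [Finset.sum_const, Finset.card_powersetCard, hsize i, smul_eq_mul]
  have hbadnat : bad.card ≤ μ * (Nat.choose m (r + 1) * Nat.choose (n - (r + 1)) (k - r)) := by
    calc bad.card ≤ (Finset.univ.biUnion
          (fun i => A.filter (fun S => r + 1 ≤ (S ∩ R i).card))).card :=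
          Finset.card_le_card hbsub
      _ ≤ ∑ i : Fin μ, (A.filter (fun S => r + 1 ≤ (S ∩ R i).card)).card :=
          Finset.card_biUnion_le
      _ ≤ ∑ _i : Fin μ, Nat.choose m (r + 1) * Nat.choose (n - (r + 1)) (k - r) :=
          Finset.sum_le_sum (fun i _ => hBi i)
      _ = μ * (Nat.choose m (r + 1) * Nat.choose (n - (r + 1)) (k - r)) := by
          rw [Finset.sum_const, Finset.card_univ, Fintype.card_fin, smul_eq_mul]
  -- choose bounds, real side
  have hnpos : (0:ℝ) < n := by exact_mod_cast hn
  have hpow : (Nat.choose (n - (r + 1)) (k - r) : ℝ) ≤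
      (((k:ℝ) + 1) / n) ^ (r + 1) * Nat.choose n (k + 1) := by
    have h := pmds_aux_pow n k hkn (r + 1) (by omega)
    have h2 : k + 1 - (r + 1) = k - r := by omega
    rw [h2] at h
    have h3 : (n:ℝ) ^ (r+1) * Nat.choose (n - (r + 1)) (k - r) ≤
        ((k:ℝ) + 1) ^ (r+1) * Nat.choose n (k + 1) := by exact_mod_cast h
    rw [div_pow, div_mul_eq_mul_div, le_div_iff₀ (by positivity)]
    linarith [h3]
  have hsymm : Nat.choose m (r + 1) ≤ Nat.choose m (min (ρ - 2) (m / 2)) := by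
    have hs : Nat.choose m (r + 1) = Nat.choose m (ρ - 2) := by
      rw [← Nat.choose_symm (show r + 1 ≤ m by omega)]
      congr 1
      omega
    rcases le_total (ρ - 2) (m / 2) with h | h
    · rw [min_eq_left h, hs]
    · rw [min_eq_right h]
      rw [hs]
      exact Nat.choose_le_middle (ρ - 2) m
  have hchoose2 : (Nat.choose m (r + 1) : ℝ) ≤
      ((ρ:ℝ) - 1) * Nat.choose m (min (ρ - 2) (m / 2)) := by
    calc (Nat.choose m (r + 1) : ℝ) ≤ (Nat.choose m (min (ρ - 2) (m / 2)) : ℝ) := by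
          exact_mod_cast hsymm
      _ ≤ ((ρ:ℝ) - 1) * Nat.choose m (min (ρ - 2) (m / 2)) := by
          nlinarith [Nat.cast_nonneg (α := ℝ) (Nat.choose m (min (ρ - 2) (m / 2)))]
  calc (bad.card : ℝ)
      ≤ (μ:ℝ) * ((Nat.choose m (r + 1) : ℝ) * (Nat.choose (n - (r + 1)) (k - r) : ℝ)) := by
        exact_mod_cast hbadnat
    _ ≤ (μ:ℝ) * ((((ρ:ℝ) - 1) * Nat.choose m (min (ρ - 2) (m / 2))) *
          ((((k:ℝ) + 1) / n) ^ (r + 1) * Nat.choose n (k + 1))) := by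
        apply mul_le_mul_of_nonneg_left _ (by positivity)
        apply mul_le_mul hchoose2 hpow (by positivity)
        positivity
    _ = (μ : ℝ) * ((ρ : ℝ) - 1) * (((k : ℝ) + 1) / n) ^ (r + 1) *
        (Nat.choose n (k + 1) : ℝ) *
        (Nat.choose m (min (ρ - 2) (m / 2)) : ℝ) := by ring
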